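/- The map Φ is a bijection from the set of weight sequences of shape (n−k,k) onto the set of torus-fixed complete N-invariant flags in V; in particular, the Springer fiber Y contains exactly binomial(n,k) torus-fixed flags. -/

import Mathlib

open Module

namespace Springer

/-- The nilpotent endomorphism `N` of `ℂ^n` with two Jordan blocks of sizes `n-k` and `k`:
the basis vectors `e 0, …, e (n-k-1)` are `p 1, …, p (n-k)` and
`e (n-k), …, e (n-1)` are `q 1, …, q k`; `N` shifts each block down by one. -/
def Nmap (n k : ℕ) : (Fin n → ℂ) →ₗ[ℂ] (Fin n → ℂ) where
  toFun x j := if h : j.val + 1 < n ∧ j.val + 1 ≠ n - k then x ⟨j.val + 1, h.1⟩ else 0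
  map_add' x y := by
    funext j
    by_cases h : j.val + 1 < n ∧ j.val + 1 ≠ n - k <;> simp [h]
  map_smul' c x := by
    funext j
    by_cases h : j.val + 1 < n ∧ j.val + 1 ≠ n - k <;> simp [h]

/-- `span (p 1, …, p t, q 1, …, q b)` inside `ℂ^n`. -/
noncomputable def spanPQ (n k t b : ℕ) : Submodule ℂ (Fin n → ℂ) :=
  Submodule.span ℂ {x | ∃ j : Fin n,
    ((j.val < t ∧ j.val < n - k) ∨ (n - k ≤ j.val ∧ j.val < n - k + b)) ∧ x = Pi.single j 1}

/-- `P = span (p 1, …, p (n-k))`. -/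
noncomputable def Pmod (n k : ℕ) : Submodule ℂ (Fin n → ℂ) := spanPQ n k (n - k) 0

/-- `Q = span (q 1, …, q k)`. -/
noncomputable def Qmod (n k : ℕ) : Submodule ℂ (Fin n → ℂ) := spanPQ n k 0 k

/-- The projection of `V` onto `Q` along `P`. -/
def projQ (n k : ℕ) : (Fin n → ℂ) →ₗ[ℂ] (Fin n → ℂ) where
  toFun x j := if n - k ≤ j.val then x j else 0
  map_add' x y := by
    funext j
    by_cases h : n - k ≤ j.val
    · simp only [Pi.add_apply, if_pos h]
    · simp only [Pi.add_apply, if_neg h, add_zero]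
  map_smul' c x := by
    funext j
    by_cases h : n - k ≤ j.val
    · simp only [Pi.smul_apply, smul_eq_mul, if_pos h, RingHom.id_apply]
    · simp only [Pi.smul_apply, smul_eq_mul, if_neg h, mul_zero, RingHom.id_apply]

/-- A complete `N`-invariant flag in `ℂ^n`: a chain `F 0 ⊆ ⋯ ⊆ F n` with `dim F i = i`
(thus `F 0 = 0` and `F n = V`) and `N (F (i+1)) ⊆ F i`. -/
def IsNFlag (n k : ℕ) (F : Fin (n + 1) → Submodule ℂ (Fin n → ℂ)) : Prop :=
  Monotone F ∧ (∀ i : Fin (n + 1), finrank ℂ (F i) = i.val) ∧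
    ∀ i : Fin n, Submodule.map (Nmap n k) (F i.succ) ≤ F i.castSucc

/-- A flag is torus fixed if each subspace is spanned by its intersections with `P` and `Q`. -/
def TorusFixed (n k : ℕ) (F : Fin (n + 1) → Submodule ℂ (Fin n → ℂ)) : Prop :=
  ∀ i, F i = (F i ⊓ Pmod n k) ⊔ (F i ⊓ Qmod n k)

/-- A weight sequence (row-strict tableau) of shape `(n-k, k)`:
`true` encodes `∨` and `false` encodes `∧`; there are exactly `k` symbols `∨`. -/
def IsWeightSeq (n k : ℕ) (w : Fin n → Bool) : Prop :=
  (Finset.univ.filter fun i => w i = true).card = k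

/-- `t i` = number of 1-based positions `≤ i` labelled `∧`. -/
def tcount (n : ℕ) (w : Fin n → Bool) (i : ℕ) : ℕ :=
  (Finset.univ.filter fun j : Fin n => j.val < i ∧ w j = false).card

/-- `b i` = number of 1-based positions `≤ i` labelled `∨`. -/
def bcount (n : ℕ) (w : Fin n → Bool) (i : ℕ) : ℕ :=
  (Finset.univ.filter fun j : Fin n => j.val < i ∧ w j = true).card

/-- The torus fixed flag `Φ(w)` attached to a weight sequence `w`:
`Φ(w) i = span (p 1, …, p (t i), q 1, …, q (b i))`. -/
noncomputable def PhiFlag (n k : ℕ) (w : Fin n → Bool) : Fin (n + 1) → Submodule ℂ (Fin n → ℂ) :=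
  fun i => spanPQ n k (tcount n w i.val) (bcount n w i.val)

/-- A crossingless matching on the points `1, …, n`: a set of cups `(i, j)` with
`1 ≤ i < j ≤ n`, pairwise disjoint, mutually non-crossing, and such that no unmatched
point (ray) lies strictly inside any cup. -/
structure CrossinglessMatching (n : ℕ) where
  cups : Finset (ℕ × ℕ)
  mem_range : ∀ p ∈ cups, 1 ≤ p.1 ∧ p.1 < p.2 ∧ p.2 ≤ n
  disjoint' : ∀ p ∈ cups, ∀ q ∈ cups, p ≠ q →
    p.1 ≠ q.1 ∧ p.1 ≠ q.2 ∧ p.2 ≠ q.1 ∧ p.2 ≠ q.2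
  noncross : ∀ p ∈ cups, ∀ q ∈ cups, ¬(p.1 < q.1 ∧ q.1 < p.2 ∧ p.2 < q.2)
  rays_outside : ∀ p ∈ cups, ∀ m : ℕ, p.1 < m → m < p.2 → ∃ q ∈ cups, m = q.1 ∨ m = q.2

/-- The point `m ∈ {1, …, n}` is matched (lies on a cup) in `C`. -/
def Matched (n : ℕ) (C : CrossinglessMatching n) (m : ℕ) : Prop :=
  ∃ p ∈ C.cups, m = p.1 ∨ m = p.2

/-- A standard tableau of shape `(n-k, k)`: a filling of the two-row Young diagram by
the numbers `1, …, n`, each used exactly once, with rows and columns strictly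
decreasing read from the top left. -/
structure StandardTableau (n k : ℕ) where
  top : Fin (n - k) → ℕ
  bot : Fin k → ℕ
  top_strict : ∀ i j : Fin (n - k), i < j → top j < top i
  bot_strict : ∀ i j : Fin k, i < j → bot j < bot i
  col_strict : ∀ (i : Fin (n - k)) (j : Fin k), i.val = j.val → bot j < top i
  mem_iff : ∀ m : ℕ, (1 ≤ m ∧ m ≤ n) ↔ ((∃ i, top i = m) ∨ (∃ j, bot j = m))
  top_ne_bot : ∀ (i : Fin (n - k)) (j : Fin k), top i ≠ bot j

/-- `C` is the crossingless matching `m(S)` associated with the standard tableau `S`: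
it has `k` cups and its left cup endpoints are exactly the bottom-row entries of `S`. -/
def IsMatchOf (n k : ℕ) (S : StandardTableau n k) (C : CrossinglessMatching n) : Prop :=
  C.cups.card = k ∧ ∀ m : ℕ, (∃ p ∈ C.cups, p.1 = m) ↔ ∃ j, S.bot j = m

/-- The weight sequence of a standard tableau: `∨` (i.e. `true`) exactly on the
bottom-row entries. -/
def tabWeight (n k : ℕ) (S : StandardTableau n k) : Fin n → Bool :=
  fun j => decide (∃ i, S.bot i = j.val + 1)

/-- The cup conditions cutting out `Y_S`: for every cup `(i, σ i)` of the matching,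
`N ^ δ i (F (σ i)) = F (i - 1)` where `δ i = (σ i - i + 1)/2`. -/
def CupCond (n k : ℕ) (C : CrossinglessMatching n)
    (F : Fin (n + 1) → Submodule ℂ (Fin n → ℂ)) : Prop :=
  ∀ p ∈ C.cups, ∀ (h1 : p.1 - 1 < n + 1) (h2 : p.2 < n + 1),
    Submodule.map ((Nmap n k) ^ ((p.2 - p.1 + 1) / 2)) (F ⟨p.2, h2⟩) = F ⟨p.1 - 1, h1⟩

/-- The ray conditions cutting out `Y_S` (for the weight sequence of `S`): for every
ray `m` of the matching, `F m = (N ^ b m)⁻¹ (range (N ^ (n - k - t m + b m)))`. -/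
def RayCond (n k : ℕ) (w : Fin n → Bool) (C : CrossinglessMatching n)
    (F : Fin (n + 1) → Submodule ℂ (Fin n → ℂ)) : Prop :=
  ∀ m : ℕ, 1 ≤ m → ∀ hm : m < n + 1, ¬ Matched n C m →
    F ⟨m, hm⟩ = Submodule.comap ((Nmap n k) ^ (bcount n w m))
      (LinearMap.range ((Nmap n k) ^ (n - k - tcount n w m + bcount n w m)))

/-- Membership in the (Spaltenstein–Vargas–Fung) component `Y_S`, where `C = m(S)`. -/
def InYS (n k : ℕ) (S : StandardTableau n k) (C : CrossinglessMatching n)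
    (F : Fin (n + 1) → Submodule ℂ (Fin n → ℂ)) : Prop :=
  IsNFlag n k F ∧ CupCond n k C F ∧ RayCond n k (tabWeight n k S) C F

/-- The weight sequence `v` orients the crossingless matching `C`: opposite labels at
the two endpoints of every cup, and `∧` at every ray. -/
def OrientsMatching (n : ℕ) (v : Fin n → Bool) (C : CrossinglessMatching n) : Prop :=
  (∀ p ∈ C.cups, ∀ (h1 : p.1 - 1 < n) (h2 : p.2 - 1 < n),
      v ⟨p.1 - 1, h1⟩ ≠ v ⟨p.2 - 1, h2⟩) ∧
  (∀ m : ℕ, 1 ≤ m → m ≤ n → ¬ Matched n C m → ∀ h : m - 1 < n, v ⟨m - 1, h⟩ = false)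

/-- `C` is the matching `m(w)` produced from the weight sequence `w` by repeatedly
joining a pair `i < j` with `w i = ∨`, `w j = ∧` and all points strictly between them
already matched, until no such pair remains. -/
def IsMw (n : ℕ) (w : Fin n → Bool) (C : CrossinglessMatching n) : Prop :=
  (∀ p ∈ C.cups, ∀ (h1 : p.1 - 1 < n) (h2 : p.2 - 1 < n),
      w ⟨p.1 - 1, h1⟩ = true ∧ w ⟨p.2 - 1, h2⟩ = false) ∧
  ¬ ∃ i j : ℕ, 1 ≤ i ∧ i < j ∧ j ≤ n ∧ ¬ Matched n C i ∧ ¬ Matched n C j ∧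
      (∀ h : i - 1 < n, w ⟨i - 1, h⟩ = true) ∧ (∀ h : j - 1 < n, w ⟨j - 1, h⟩ = false) ∧
      (∀ m : ℕ, i < m → m < j → Matched n C m)

/-- `Cw` is the completed matching `C(w)`: a crossingless matching with `k` cups
containing `m(w) = Cm` on whose every cup `w` puts opposite labels. -/
def IsCw (n k : ℕ) (w : Fin n → Bool) (Cm Cw : CrossinglessMatching n) : Prop :=
  Cm.cups ⊆ Cw.cups ∧ Cw.cups.card = k ∧
  ∀ p ∈ Cw.cups, ∀ (h1 : p.1 - 1 < n) (h2 : p.2 - 1 < n),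
    w ⟨p.1 - 1, h1⟩ ≠ w ⟨p.2 - 1, h2⟩

/-- Membership in the closed attracting set `St(w)`, where `S = S(w)` and `Cw = C(w)`:
a flag of `Y_{S(w)}` such that `F i = Φ(w) i` for every `i` with `w i = ∧` which is a
left cup endpoint of `C(w)`. -/
def InSt (n k : ℕ) (w : Fin n → Bool) (S : StandardTableau n k)
    (Cw : CrossinglessMatching n) (F : Fin (n + 1) → Submodule ℂ (Fin n → ℂ)) : Prop :=
  InYS n k S Cw F ∧
  ∀ i : ℕ, ∀ hi : i < n + 1, (∀ h : i - 1 < n, w ⟨i - 1, h⟩ = false) →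
    (∃ p ∈ Cw.cups, p.1 = i) → F ⟨i, hi⟩ = PhiFlag n k w ⟨i, hi⟩

/-- The generating relation of `∼_C`: `a ∼ σ(a+1)` whenever `a+1` is a left cup
endpoint of `C`. -/
def cupRel (n : ℕ) (C : CrossinglessMatching n) (a b : ℕ) : Prop :=
  ∃ p ∈ C.cups, p.1 = a + 1 ∧ p.2 = b

/-- The equivalence relation `∼_C` on `{0, 1, …, n}`. -/
def simRel (n : ℕ) (C : CrossinglessMatching n) : ℕ → ℕ → Prop :=
  Relation.EqvGen (cupRel n C)

/-- The equivalence relation `≈_{C,D}` on `{0, 1, …, n}` generated by `∼_C` and `∼_D`. -/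
def approxRel (n : ℕ) (C D : CrossinglessMatching n) : ℕ → ℕ → Prop :=
  Relation.EqvGen (fun a b => cupRel n C a b ∨ cupRel n D a b)

/-- Adjacency in the glued diagram `D̄C`: `i` and `j` are joined by a cup of `C` or of `D`. -/
def Adj (n : ℕ) (C D : CrossinglessMatching n) (i j : ℕ) : Prop :=
  (i, j) ∈ C.cups ∨ (j, i) ∈ C.cups ∨ (i, j) ∈ D.cups ∨ (j, i) ∈ D.cups

/-- Lying in the same connected component of the glued diagram `D̄C`. -/
def Conn (n : ℕ) (C D : CrossinglessMatching n) : ℕ → ℕ → Prop :=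
  Relation.EqvGen (Adj n C D)

/-- The component of `v` in the glued diagram is a circle: every vertex of the
component is matched both in `C` and in `D`. -/
def IsCircleComp (n : ℕ) (C D : CrossinglessMatching n) (v : ℕ) : Prop :=
  ∀ u, Conn n C D u v → Matched n C u ∧ Matched n D u

/-- `v` is the leftmost vertex of its connected component (circle or line) of the
glued diagram. -/
def IsLeftmost (n : ℕ) (C D : CrossinglessMatching n) (v : ℕ) : Prop :=
  1 ≤ v ∧ v ≤ n ∧ ∀ u, 1 ≤ u → Conn n C D u v → v ≤ u

/-- An orientation of the glued diagram `D̄C` (with `C = m(w)` and `D = m(w')`):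
a weight sequence assigning opposite labels to the endpoints of every cup of `C` and
of `D`, agreeing with `w` at every ray of `C` and with `w'` at every ray of `D`. -/
def OrientsGlued (n k : ℕ) (w w' : Fin n → Bool) (C D : CrossinglessMatching n)
    (v : Fin n → Bool) : Prop :=
  IsWeightSeq n k v ∧
  (∀ p ∈ C.cups, ∀ (h1 : p.1 - 1 < n) (h2 : p.2 - 1 < n),
      v ⟨p.1 - 1, h1⟩ ≠ v ⟨p.2 - 1, h2⟩) ∧
  (∀ p ∈ D.cups, ∀ (h1 : p.1 - 1 < n) (h2 : p.2 - 1 < n),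
      v ⟨p.1 - 1, h1⟩ ≠ v ⟨p.2 - 1, h2⟩) ∧
  (∀ i : Fin n, ¬ Matched n C (i.val + 1) → v i = w i) ∧
  (∀ i : Fin n, ¬ Matched n D (i.val + 1) → v i = w' i)

/-- The component of `v0` in the glued diagram is orientable: it admits a labeling of
its vertices by `∧, ∨`, opposite across every edge, agreeing with `w` at every vertex
which is a ray of `C` and with `w'` at every vertex which is a ray of `D`. -/
def ComponentOrientable (n : ℕ) (w w' : Fin n → Bool) (C D : CrossinglessMatching n)
    (v0 : ℕ) : Prop :=
  ∃ g : ℕ → Bool,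
    (∀ i j, Conn n C D i v0 → Adj n C D i j → g i ≠ g j) ∧
    (∀ i, Conn n C D i v0 → 1 ≤ i → i ≤ n → ¬ Matched n C i →
      ∀ h : i - 1 < n, g i = w ⟨i - 1, h⟩) ∧
    (∀ i, Conn n C D i v0 → 1 ≤ i → i ≤ n → ¬ Matched n D i →
      ∀ h : i - 1 < n, g i = w' ⟨i - 1, h⟩)

/-- A walk in the glued multigraph `D̄C` from `a` to `b`: a list of edges, each tagged
by `true` (an edge of `C`) or `false` (an edge of `D`), consecutively incident. -/
def IsGluedWalk (n : ℕ) (C D : CrossinglessMatching n) : ℕ → ℕ → List (Bool × ℕ × ℕ) → Prop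
  | a, b, [] => a = b
  | a, b, e :: es =>
      (if e.1 = true then (e.2.1, e.2.2) ∈ C.cups else (e.2.1, e.2.2) ∈ D.cups) ∧
      ((a = e.2.1 ∧ IsGluedWalk n C D e.2.2 b es) ∨ (a = e.2.2 ∧ IsGluedWalk n C D e.2.1 b es))

/-- The standard flag of `ℂ^n`. -/
noncomputable def stdFlag (n k : ℕ) : Fin (n + 1) → Submodule ℂ (Fin n → ℂ) :=
  fun i => spanPQ n k (min i.val (n - k)) (i.val - (n - k))



/-! ### Helper development -/

section Helpers

/-- coordinate subspace: functions vanishing outside `s`. -/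
noncomputable def coordSub (n : ℕ) (s : Finset (Fin n)) : Submodule ℂ (Fin n → ℂ) where
  carrier := {x | ∀ j ∉ s, x j = 0}
  add_mem' hx hy j hj := by simp [hx j hj, hy j hj]
  zero_mem' j _ := rfl
  smul_mem' c x hx j hj := by simp [hx j hj]

lemma mem_coordSub {n : ℕ} {s : Finset (Fin n)} {x : Fin n → ℂ} :
    x ∈ coordSub n s ↔ ∀ j ∉ s, x j = 0 := Iff.rfl

lemma single_smul_one {n : ℕ} (j : Fin n) (c : ℂ) :
    (Pi.single j c : Fin n → ℂ) = c • (Pi.single j (1:ℂ) : Fin n → ℂ) := by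
  funext j'
  by_cases h : j' = j
  · subst h; simp
  · simp [Pi.single_eq_of_ne h]

lemma coordSub_eq_span (n : ℕ) (s : Finset (Fin n)) :
    coordSub n s = Submodule.span ℂ ((fun j => Pi.single j (1:ℂ)) '' ↑s) := by
  apply le_antisymm
  · intro x hx
    have hxsum : x = ∑ j ∈ s, (Pi.single j (x j) : Fin n → ℂ) := by
      funext j'
      rw [Finset.sum_apply]
      by_cases hj : j' ∈ s
      · rw [Finset.sum_eq_single j']
        · simp
        · intro b _ hb; exact Pi.single_eq_of_ne (Ne.symm hb) _
        · intro h; exact absurd hj h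
      · rw [hx j' hj]
        symm
        apply Finset.sum_eq_zero
        intro b hb
        exact Pi.single_eq_of_ne (fun h => hj (by rw [h]; exact hb)) _
    rw [hxsum]
    apply Submodule.sum_mem
    intro j hj
    rw [single_smul_one]
    exact Submodule.smul_mem _ _ (Submodule.subset_span ⟨j, hj, rfl⟩)
  · rw [Submodule.span_le]
    rintro x ⟨j, hj, rfl⟩ j' hj'
    exact Pi.single_eq_of_ne (fun h => hj' (by rw [h]; exact hj)) _

lemma finrank_coordSub (n : ℕ) (s : Finset (Fin n)) :
    finrank ℂ (coordSub n s) = s.card := by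
  rw [coordSub_eq_span]
  have hli : LinearIndependent ℂ (fun j : {j // j ∈ s} => (Pi.single (j : Fin n) (1:ℂ) : Fin n → ℂ)) := by
    have := (Pi.basisFun ℂ (Fin n)).linearIndependent
    have h2 := this.comp (Subtype.val : {j // j ∈ s} → Fin n) Subtype.val_injective
    convert h2 using 1
    funext j
    simp [Pi.basisFun_apply]
  have hrange : Set.range (fun j : {j // j ∈ s} => (Pi.single (j : Fin n) (1:ℂ) : Fin n → ℂ))
      = (fun j => Pi.single j (1:ℂ)) '' ↑s := by
    ext x
    simp [Set.range, Set.mem_image]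
  rw [← hrange, finrank_span_eq_card hli, Fintype.card_coe]

/-- the index predicate defining `spanPQ`. -/
def idxP (n k t b : ℕ) (j : Fin n) : Prop :=
  (j.val < t ∧ j.val < n - k) ∨ (n - k ≤ j.val ∧ j.val < n - k + b)

instance {n k t b : ℕ} : DecidablePred (idxP n k t b) := fun j => by
  unfold idxP; infer_instance

/-- the index finset defining `spanPQ`. -/
def idxF (n k t b : ℕ) : Finset (Fin n) := Finset.univ.filter (idxP n k t b)

lemma mem_idxF {n k t b : ℕ} {j : Fin n} :
    j ∈ idxF n k t b ↔ (j.val < t ∧ j.val < n - k) ∨ (n - k ≤ j.val ∧ j.val < n - k + b) := by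
  simp [idxF, idxP]

lemma spanPQ_eq_coordSub (n k t b : ℕ) :
    spanPQ n k t b = coordSub n (idxF n k t b) := by
  rw [coordSub_eq_span, spanPQ]
  congr 1
  ext x
  constructor
  · rintro ⟨j, hj, rfl⟩; exact ⟨j, mem_idxF.2 hj, rfl⟩
  · rintro ⟨j, hj, rfl⟩; exact ⟨j, mem_idxF.1 hj, rfl⟩

lemma mem_spanPQ {n k t b : ℕ} {x : Fin n → ℂ} :
    x ∈ spanPQ n k t b ↔ ∀ j : Fin n,
      ¬((j.val < t ∧ j.val < n - k) ∨ (n - k ≤ j.val ∧ j.val < n - k + b)) → x j = 0 := by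
  rw [spanPQ_eq_coordSub]
  constructor
  · intro h j hj; exact h j (fun hm => hj (mem_idxF.1 hm))
  · intro h j hj; exact h j (fun hm => hj (mem_idxF.2 hm))

lemma finrank_spanPQ {n k t b : ℕ} (hkn : k ≤ n) (ht : t ≤ n - k) (hb : b ≤ k) :
    finrank ℂ (spanPQ n k t b) = t + b := by
  rw [spanPQ_eq_coordSub, finrank_coordSub]
  have : idxF n k t b = (Finset.univ.filter (fun j : Fin n => j.val < t)) ∪
      (Finset.univ.filter (fun j : Fin n => n - k ≤ j.val ∧ j.val < n - k + b)) := by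
    ext j; simp [mem_idxF]; omega
  rw [this, Finset.card_union_of_disjoint]
  · have h1 : (Finset.univ.filter (fun j : Fin n => j.val < t)).card = (Finset.range t).card := by
      apply Finset.card_bij (fun (j : Fin n) _ => j.val)
      · intro a ha; exact Finset.mem_range.2 (Finset.mem_filter.1 ha).2
      · intro a ha a' ha' h; exact Fin.ext h
      · intro c hc
        have hct : c < t := Finset.mem_range.1 hc
        refine ⟨⟨c, by omega⟩, Finset.mem_filter.2 ⟨Finset.mem_univ _, hct⟩, rfl⟩
    have h2 : (Finset.univ.filter (fun j : Fin n => n - k ≤ j.val ∧ j.val < n - k + b)).card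
        = (Finset.Ico (n - k) (n - k + b)).card := by
      apply Finset.card_bij (fun (j : Fin n) _ => j.val)
      · intro a ha
        exact Finset.mem_Ico.2 (Finset.mem_filter.1 ha).2
      · intro a ha a' ha' h; exact Fin.ext h
      · intro c hc
        have hc2 := Finset.mem_Ico.1 hc
        refine ⟨⟨c, by omega⟩, Finset.mem_filter.2 ⟨Finset.mem_univ _, hc2⟩, rfl⟩
    rw [h1, h2, Finset.card_range, Nat.card_Ico]
    omega
  · rw [Finset.disjoint_filter]
    intro j _ hj hj2
    omega

lemma spanPQ_mono {n k t b t' b' : ℕ} (ht : t ≤ t') (hb : b ≤ b') :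
    spanPQ n k t b ≤ spanPQ n k t' b' := by
  intro x hx
  rw [mem_spanPQ] at hx ⊢
  intro j hj
  apply hx
  intro h
  apply hj
  rcases h with ⟨h1, h2⟩ | ⟨h1, h2⟩
  · exact Or.inl ⟨lt_of_lt_of_le h1 ht, h2⟩
  · exact Or.inr ⟨h1, by omega⟩

lemma spanPQ_sup (n k t b : ℕ) :
    spanPQ n k t b = spanPQ n k t 0 ⊔ spanPQ n k 0 b := by
  have h : idxF n k t b = idxF n k t 0 ∪ idxF n k 0 b := by
    ext j
    simp only [Finset.mem_union, mem_idxF]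
    omega
  simp only [spanPQ_eq_coordSub, coordSub_eq_span]
  rw [h, Finset.coe_union, Set.image_union, Submodule.span_union]

lemma spanPQ_inf_PQ (n k : ℕ) : spanPQ n k (n - k) 0 ⊓ spanPQ n k 0 k = ⊥ := by
  rw [eq_bot_iff]
  intro x hx
  obtain ⟨h1, h2⟩ := Submodule.mem_inf.1 hx
  rw [mem_spanPQ] at h1 h2
  have : x = 0 := by
    funext j
    by_cases h : j.val < n - k
    · exact h2 j (by omega)
    · exact h1 j (by omega)
  simp [this]

lemma map_Nmap_spanPQ {n k t b t' b' : ℕ} (ht : t ≤ t' + 1) (hb : b ≤ b' + 1) :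
    Submodule.map (Nmap n k) (spanPQ n k t b) ≤ spanPQ n k t' b' := by
  rintro _ ⟨x, hx, rfl⟩
  have hx := mem_spanPQ.1 hx
  rw [mem_spanPQ]
  intro j hj
  show (if h : j.val + 1 < n ∧ j.val + 1 ≠ n - k then x ⟨j.val + 1, h.1⟩ else 0) = 0
  split_ifs with h
  · apply hx
    rintro (⟨h1, h2⟩ | ⟨h1, h2⟩) <;> simp only [] at h1 h2
    · exact hj (Or.inl ⟨by omega, by omega⟩)
    · have : n - k ≤ j.val := by omega
      exact hj (Or.inr ⟨this, by omega⟩)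
  · rfl

end Helpers


section Counts

variable {n k : ℕ} {w : Fin n → Bool}

lemma card_val_lt {n i : ℕ} (h : i ≤ n) :
    (Finset.univ.filter (fun j : Fin n => j.val < i)).card = i := by
  have : (Finset.univ.filter (fun j : Fin n => j.val < i)).card = (Finset.range i).card := by
    apply Finset.card_bij (fun (j : Fin n) _ => j.val)
    · intro a ha; exact Finset.mem_range.2 (Finset.mem_filter.1 ha).2
    · intro a ha a' ha' hh; exact Fin.ext hh
    · intro c hc
      have hct := Finset.mem_range.1 hc
      exact ⟨⟨c, by omega⟩, Finset.mem_filter.2 ⟨Finset.mem_univ _, hct⟩, rfl⟩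
  rw [this, Finset.card_range]

lemma tcount_add_bcount (i : ℕ) (hi : i ≤ n) :
    tcount n w i + bcount n w i = i := by
  rw [tcount, bcount]
  have h1 : (Finset.univ.filter (fun j : Fin n => j.val < i ∧ w j = false)) =
      (Finset.univ.filter (fun j : Fin n => j.val < i)).filter (fun j => ¬(w j = true)) := by
    ext j; simp [Finset.mem_filter, and_assoc]
  have h2 : (Finset.univ.filter (fun j : Fin n => j.val < i ∧ w j = true)) =
      (Finset.univ.filter (fun j : Fin n => j.val < i)).filter (fun j => w j = true) := by
    ext j; simp [Finset.mem_filter, and_assoc]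
  rw [h1, h2, add_comm, Finset.card_filter_add_card_filter_not, card_val_lt hi]

lemma tcount_mono {i i' : ℕ} (h : i ≤ i') : tcount n w i ≤ tcount n w i' := by
  apply Finset.card_le_card
  intro j hj
  rw [Finset.mem_filter] at hj ⊢
  exact ⟨hj.1, by omega, hj.2.2⟩

lemma bcount_mono {i i' : ℕ} (h : i ≤ i') : bcount n w i ≤ bcount n w i' := by
  apply Finset.card_le_card
  intro j hj
  rw [Finset.mem_filter] at hj ⊢
  exact ⟨hj.1, by omega, hj.2.2⟩

lemma bcount_succ (i : ℕ) (hi : i < n) :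
    bcount n w (i + 1) = bcount n w i + if w ⟨i, hi⟩ = true then 1 else 0 := by
  rw [bcount, bcount]
  by_cases hw : w ⟨i, hi⟩ = true
  · rw [if_pos hw]
    have h : (Finset.univ.filter (fun j : Fin n => j.val < i + 1 ∧ w j = true)) =
        insert ⟨i, hi⟩ (Finset.univ.filter (fun j : Fin n => j.val < i ∧ w j = true)) := by
      ext j
      simp only [Finset.mem_filter, Finset.mem_univ, true_and, Finset.mem_insert]
      constructor
      · rintro ⟨h1, h2⟩
        by_cases hj : j.val = i
        · exact Or.inl (Fin.ext hj)
        · exact Or.inr ⟨by omega, h2⟩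
      · rintro (rfl | ⟨h1, h2⟩)
        · exact ⟨by simp, hw⟩
        · exact ⟨by omega, h2⟩
    rw [h, Finset.card_insert_of_notMem]
    simp only [Finset.mem_filter]
    rintro ⟨-, h1, -⟩
    omega
  · rw [if_neg hw, add_zero]
    congr 1
    ext j
    simp only [Finset.mem_filter, Finset.mem_univ, true_and]
    constructor
    · rintro ⟨h1, h2⟩
      refine ⟨?_, h2⟩
      rcases Nat.lt_succ_iff_lt_or_eq.1 h1 with h | h
      · exact h
      · exact absurd h2 (by rw [show j = (⟨i, hi⟩ : Fin n) from Fin.ext h]; exact hw)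
    · rintro ⟨h1, h2⟩
      exact ⟨by omega, h2⟩

lemma tcount_succ (i : ℕ) (hi : i < n) :
    tcount n w (i + 1) = tcount n w i + if w ⟨i, hi⟩ = true then 0 else 1 := by
  have h1 := tcount_add_bcount (w := w) i (by omega)
  have h2 := tcount_add_bcount (w := w) (i + 1) hi
  have h3 := bcount_succ (w := w) i hi
  by_cases hw : w ⟨i, hi⟩ = true <;> simp [hw] at h3 ⊢ <;> omega

lemma bcount_n (hw : IsWeightSeq n k w) : bcount n w n = k := by
  rw [bcount, ← hw]
  congr 1
  ext j
  simp [j.isLt]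

lemma tcount_n (hw : IsWeightSeq n k w) : tcount n w n = n - k := by
  have h1 := tcount_add_bcount (w := w) n le_rfl
  rw [bcount_n hw] at h1
  omega

lemma bcount_le_k (hw : IsWeightSeq n k w) (i : ℕ) (hi : i ≤ n) : bcount n w i ≤ k := by
  calc bcount n w i ≤ bcount n w n := bcount_mono hi
  _ = k := bcount_n hw

lemma tcount_le (hw : IsWeightSeq n k w) (i : ℕ) (hi : i ≤ n) : tcount n w i ≤ n - k := by
  calc tcount n w i ≤ tcount n w n := tcount_mono hi
  _ = n - k := tcount_n hw

lemma phiFlag_isNFlag (hkn : 2 * k ≤ n) (hw : IsWeightSeq n k w) :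
    IsNFlag n k (PhiFlag n k w) := by
  have hk : k ≤ n := by omega
  refine ⟨?_, ?_, ?_⟩
  · intro i i' hii
    exact spanPQ_mono (tcount_mono hii) (bcount_mono hii)
  · intro i
    show finrank ℂ (spanPQ n k (tcount n w i.val) (bcount n w i.val)) = i.val
    rw [finrank_spanPQ hk (tcount_le hw i.val (by omega)) (bcount_le_k hw i.val (by omega)),
      tcount_add_bcount i.val (by omega)]
  · intro i
    have h1 : tcount n w i.succ.val ≤ tcount n w i.castSucc.val + 1 := by
      have := tcount_succ (w := w) i.val i.isLt
      simp only [Fin.val_succ, Fin.coe_castSucc] at *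
      rw [this]
      split_ifs <;> omega
    have h2 : bcount n w i.succ.val ≤ bcount n w i.castSucc.val + 1 := by
      have := bcount_succ (w := w) i.val i.isLt
      simp only [Fin.val_succ, Fin.coe_castSucc] at *
      rw [this]
      split_ifs <;> omega
    exact map_Nmap_spanPQ h1 h2

lemma spanPQ_torus_decomp {n k t b : ℕ} (ht : t ≤ n - k) (hb : b ≤ k) :
    spanPQ n k t b = (spanPQ n k t b ⊓ Pmod n k) ⊔ (spanPQ n k t b ⊓ Qmod n k) := by
  refine le_antisymm ?_ (sup_le inf_le_left inf_le_left)
  have h1 : spanPQ n k t 0 ≤ spanPQ n k t b ⊓ Pmod n k :=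
    le_inf (spanPQ_mono le_rfl (Nat.zero_le _)) (spanPQ_mono ht le_rfl)
  have h2 : spanPQ n k 0 b ≤ spanPQ n k t b ⊓ Qmod n k :=
    le_inf (spanPQ_mono (Nat.zero_le _) le_rfl) (spanPQ_mono le_rfl hb)
  exact (spanPQ_sup n k t b).trans_le
    (sup_le (h1.trans le_sup_left) (h2.trans le_sup_right))

lemma phiFlag_torusFixed (hkn : 2 * k ≤ n) (hw : IsWeightSeq n k w) :
    TorusFixed n k (PhiFlag n k w) := fun i =>
  spanPQ_torus_decomp (tcount_le hw i.val (by omega)) (bcount_le_k hw i.val (by omega))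

end Counts


section Block

variable {n k : ℕ} {W : Submodule ℂ (Fin n → ℂ)}

lemma eq_inv_smul_of_eq_smul {x y : Fin n → ℂ} {c : ℂ} (hc : c ≠ 0) (h : x = c • y) :
    y = c⁻¹ • x := by
  rw [h, smul_smul, inv_mul_cancel₀ hc, one_smul]

lemma singles_mem_of_top (a B : ℕ) (hBn : B ≤ n)
    (hshift : ∀ j, a < j → j < B → j ≠ n - k)
    (hInv : Submodule.map (Nmap n k) W ≤ W)
    (hwin : ∀ x ∈ W, ∀ j : Fin n, j.val < a ∨ B ≤ j.val → x j = 0) :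
    ∀ m : ℕ, a ≤ m → m < B → ∀ x ∈ W, (∀ j : Fin n, m < j.val → x j = 0) →
      ∀ hmn : m < n, x ⟨m, hmn⟩ ≠ 0 →
      ∀ j : Fin n, a ≤ j.val → j.val ≤ m → (Pi.single j (1:ℂ) : Fin n → ℂ) ∈ W := by
  intro m ham
  induction m, ham using Nat.le_induction with
  | base =>
    intro haB x hxW hsupp han hxa j hj1 hj2
    have hjeq : j = ⟨a, han⟩ := Fin.ext (le_antisymm hj2 hj1)
    have hxeq : x = x ⟨a, han⟩ • (Pi.single (⟨a, han⟩ : Fin n) (1:ℂ) : Fin n → ℂ) := by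
      funext j'
      rcases lt_trichotomy j'.val a with h | h | h
      · rw [hwin x hxW j' (Or.inl h)]
        have : j' ≠ (⟨a, han⟩ : Fin n) := fun hh => by simp [hh] at h
        simp [Pi.single_eq_of_ne this]
      · have : j' = (⟨a, han⟩ : Fin n) := Fin.ext h
        subst this; simp
      · rw [hsupp j' h]
        have : j' ≠ (⟨a, han⟩ : Fin n) := fun hh => by simp [hh] at h
        simp [Pi.single_eq_of_ne this]
    rw [hjeq]
    have := eq_inv_smul_of_eq_smul hxa hxeq
    rw [this]
    exact Submodule.smul_mem _ _ hxW
  | succ m ham IH =>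
    intro hB1 x hxW hsupp hmn hxtop j hj1 hj2
    have hmB : m < B := by omega
    have hmn' : m < n := by omega
    -- apply N
    have hyW : Nmap n k x ∈ W := hInv ⟨x, hxW, rfl⟩
    have hysupp : ∀ j' : Fin n, m < j'.val → (Nmap n k x) j' = 0 := by
      intro j' hj'
      show (if h : j'.val + 1 < n ∧ j'.val + 1 ≠ n - k then x ⟨j'.val + 1, h.1⟩ else 0) = 0
      split_ifs with h
      · exact hsupp _ (by simp; omega)
      · rfl
    have hytop : (Nmap n k x) ⟨m, hmn'⟩ = x ⟨m + 1, hmn⟩ := by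
      show (if h : m + 1 < n ∧ m + 1 ≠ n - k then x ⟨m + 1, h.1⟩ else 0) = x ⟨m + 1, hmn⟩
      rw [dif_pos ⟨hmn, hshift (m + 1) (by omega) hB1⟩]
    have hsingles : ∀ j' : Fin n, a ≤ j'.val → j'.val ≤ m →
        (Pi.single j' (1:ℂ) : Fin n → ℂ) ∈ W := by
      apply IH hmB (Nmap n k x) hyW hysupp hmn'
      rw [hytop]; exact hxtop
    rcases Nat.lt_succ_iff_lt_or_eq.1 (Nat.lt_succ_of_le hj2) with hj | hj
    · exact hsingles j hj1 (by omega)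
    · -- j.val = m + 1
      have hjeq : j = ⟨m + 1, hmn⟩ := Fin.ext hj
      set S : Finset (Fin n) := Finset.univ.filter (fun j' : Fin n => a ≤ j'.val ∧ j'.val ≤ m)
        with hSdef
      have hsumW : (∑ j' ∈ S, (Pi.single j' (x j') : Fin n → ℂ)) ∈ W := by
        apply Submodule.sum_mem
        intro j' hj'
        rw [single_smul_one]
        obtain ⟨hj'a, hj'm⟩ := (Finset.mem_filter.1 hj').2
        exact Submodule.smul_mem _ _ (hsingles j' hj'a hj'm)
      have hzW : x - (∑ j' ∈ S, (Pi.single j' (x j') : Fin n → ℂ)) ∈ W :=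
        Submodule.sub_mem _ hxW hsumW
      have hsumval : ∀ j' : Fin n, (∑ j'' ∈ S, (Pi.single j'' (x j'') : Fin n → ℂ)) j'
          = if j' ∈ S then x j' else 0 := by
        intro j'
        rw [Finset.sum_apply]
        by_cases hj' : j' ∈ S
        · rw [if_pos hj', Finset.sum_eq_single j']
          · simp
          · intro b _ hb; exact Pi.single_eq_of_ne (Ne.symm hb) _
          · intro h; exact absurd hj' h
        · rw [if_neg hj']
          apply Finset.sum_eq_zero
          intro b hb
          exact Pi.single_eq_of_ne (fun h => hj' (by rw [h]; exact hb)) _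
      have hzeq : x - (∑ j' ∈ S, (Pi.single j' (x j') : Fin n → ℂ))
          = x ⟨m + 1, hmn⟩ • (Pi.single (⟨m + 1, hmn⟩ : Fin n) (1:ℂ) : Fin n → ℂ) := by
        funext j'
        rw [Pi.sub_apply, hsumval j']
        by_cases hne : j' = (⟨m + 1, hmn⟩ : Fin n)
        · rw [hne]
          have hnotS : (⟨m + 1, hmn⟩ : Fin n) ∉ S := by simp [hSdef]
          rw [if_neg hnotS]
          simp
        · have hval : j'.val ≠ m + 1 := fun h => hne (Fin.ext h)
          simp only [Pi.smul_apply, Pi.single_eq_of_ne hne, smul_zero, smul_eq_mul, mul_zero]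
          by_cases hj' : j' ∈ S
          · rw [if_pos hj']; ring
          · rw [if_neg hj', sub_zero]
            have hj'' : ¬(a ≤ j'.val ∧ j'.val ≤ m) := by
              intro hcon
              exact hj' (Finset.mem_filter.2 ⟨Finset.mem_univ _, hcon⟩)
            rcases Nat.lt_or_ge j'.val a with h | h
            · exact hwin x hxW j' (Or.inl h)
            · exact hsupp j' (by omega)
      rw [hjeq, eq_inv_smul_of_eq_smul hxtop hzeq]
      exact Submodule.smul_mem _ _ hzW

lemma card_val_Icc {n a c : ℕ} (hc : c < n) :
    (Finset.univ.filter (fun j : Fin n => a ≤ j.val ∧ j.val ≤ c)).card = c + 1 - a := by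
  have : (Finset.univ.filter (fun j : Fin n => a ≤ j.val ∧ j.val ≤ c)).card
      = (Finset.Ico a (c + 1)).card := by
    apply Finset.card_bij (fun (j : Fin n) _ => j.val)
    · intro x hx
      have := (Finset.mem_filter.1 hx).2
      rw [Finset.mem_Ico]; omega
    · intro x hx x' hx' h; exact Fin.ext h
    · intro c' hc'
      have h := Finset.mem_Ico.1 hc'
      exact ⟨⟨c', by omega⟩, Finset.mem_filter.2 ⟨Finset.mem_univ _, by constructor <;> simp <;> omega⟩, rfl⟩
  rw [this, Nat.card_Ico]

lemma block_eq (a B : ℕ) (haB : a ≤ B) (hBn : B ≤ n)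
    (hshift : ∀ j, a < j → j < B → j ≠ n - k)
    (hInv : Submodule.map (Nmap n k) W ≤ W)
    (hwin : ∀ x ∈ W, ∀ j : Fin n, j.val < a ∨ B ≤ j.val → x j = 0) :
    a + finrank ℂ W ≤ B ∧
      W = coordSub n (Finset.univ.filter
        (fun j : Fin n => a ≤ j.val ∧ j.val < a + finrank ℂ W)) := by
  classical
  by_cases hbot : W = ⊥
  · subst hbot
    rw [finrank_bot]
    refine ⟨by omega, ?_⟩
    have hempty : (Finset.univ.filter
        (fun j : Fin n => a ≤ j.val ∧ j.val < a + 0)) = (∅ : Finset (Fin n)) := by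
      ext j
      simp only [Finset.mem_filter, Finset.mem_univ, true_and, Finset.notMem_empty, iff_false]
      omega
    rw [hempty]
    apply le_antisymm bot_le
    intro x hx
    have : x = 0 := funext fun j => hx j (Finset.notMem_empty j)
    simp [this]
  · obtain ⟨x₀, hx₀W, hx₀ne⟩ := (Submodule.ne_bot_iff W).1 hbot
    set S : Finset (Fin n) := Finset.univ.filter (fun j : Fin n => ∃ x ∈ W, x j ≠ 0)
      with hSdef
    have hSne : S.Nonempty := by
      obtain ⟨j, hj⟩ := Function.ne_iff.1 hx₀ne
      exact ⟨j, Finset.mem_filter.2 ⟨Finset.mem_univ _, x₀, hx₀W, hj⟩⟩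
    set m : Fin n := S.max' hSne with hmdef
    obtain ⟨x, hxW, hxm⟩ := (Finset.mem_filter.1 (S.max'_mem hSne)).2
    have hmax : ∀ j : Fin n, ∀ y ∈ W, y j ≠ 0 → j ≤ m := by
      intro j y hy hyj
      exact S.le_max' j (Finset.mem_filter.2 ⟨Finset.mem_univ _, y, hy, hyj⟩)
    have ham : a ≤ m.val ∧ m.val < B := by
      by_contra h
      exact hxm (hwin x hxW m (by omega))
    have hsupp : ∀ j : Fin n, m.val < j.val → x j = 0 := by
      intro j hj
      by_contra h
      exact absurd (hmax j x hxW h) (by rw [Fin.le_def]; omega)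
    have hWeq : W = coordSub n (Finset.univ.filter
        (fun j : Fin n => a ≤ j.val ∧ j.val ≤ m.val)) := by
      apply le_antisymm
      · intro y hy j hj
        by_contra hne
        have h1 : a ≤ j.val := by
          by_contra h
          exact hne (hwin y hy j (Or.inl (by omega)))
        have h2 := hmax j y hy hne
        exact hj (Finset.mem_filter.2 ⟨Finset.mem_univ _, h1, Fin.le_def.1 h2⟩)
      · rw [coordSub_eq_span, Submodule.span_le]
        rintro _ ⟨j, hj, rfl⟩
        rw [Finset.mem_coe, Finset.mem_filter] at hj
        have hm' : x ⟨m.val, m.isLt⟩ ≠ 0 := by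
          have : (⟨m.val, m.isLt⟩ : Fin n) = m := Fin.eta m m.isLt
          rw [this]; exact hxm
        exact singles_mem_of_top a B hBn hshift hInv hwin m.val ham.1 ham.2
          x hxW hsupp m.isLt hm' j hj.2.1 hj.2.2
    have hfr : finrank ℂ W = m.val + 1 - a := by
      rw [hWeq, finrank_coordSub, card_val_Icc m.isLt]
    refine ⟨by omega, ?_⟩
    rw [hfr, hWeq]
    congr 1
    ext j
    simp only [Finset.mem_filter, Finset.mem_univ, true_and]
    have hma := ham.1
    omega

lemma block_P (hk : k ≤ n) (hWP : W ≤ Pmod n k)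
    (hInv : Submodule.map (Nmap n k) W ≤ W) :
    W = spanPQ n k (finrank ℂ W) 0 ∧ finrank ℂ W ≤ n - k := by
  have hwin : ∀ x ∈ W, ∀ j : Fin n, j.val < 0 ∨ n - k ≤ j.val → x j = 0 := by
    intro x hx j hj
    have := mem_spanPQ.1 (hWP hx)
    exact this j (by omega)
  set r := finrank ℂ W with hr
  obtain ⟨h1, h2⟩ := block_eq 0 (n - k) (Nat.zero_le _) (by omega)
    (fun j h1 h2 => by omega) hInv hwin
  rw [← hr] at h1 h2
  refine ⟨?_, by omega⟩
  rw [h2, spanPQ_eq_coordSub]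
  congr 1
  ext j
  simp only [Finset.mem_filter, Finset.mem_univ, true_and, mem_idxF]
  omega

lemma block_Q (hk : k ≤ n) (hWQ : W ≤ Qmod n k)
    (hInv : Submodule.map (Nmap n k) W ≤ W) :
    W = spanPQ n k 0 (finrank ℂ W) ∧ finrank ℂ W ≤ k := by
  have hwin : ∀ x ∈ W, ∀ j : Fin n, j.val < n - k ∨ n ≤ j.val → x j = 0 := by
    intro x hx j hj
    have := mem_spanPQ.1 (hWQ hx)
    have hjn := j.isLt
    exact this j (by omega)
  set r := finrank ℂ W with hr
  obtain ⟨h1, h2⟩ := block_eq (n - k) n (by omega) le_rfl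
    (fun j ha hb => by omega) hInv hwin
  rw [← hr] at h1 h2
  refine ⟨?_, by omega⟩
  rw [h2, spanPQ_eq_coordSub]
  congr 1
  ext j
  simp only [Finset.mem_filter, Finset.mem_univ, true_and, mem_idxF]
  omega

end Block


section Surj

variable {n k : ℕ}

lemma single_mem_spanPQ {t b : ℕ} {j : Fin n} :
    (Pi.single j (1:ℂ) : Fin n → ℂ) ∈ spanPQ n k t b ↔
      ((j.val < t ∧ j.val < n - k) ∨ (n - k ≤ j.val ∧ j.val < n - k + b)) := by
  constructor
  · intro h
    by_contra hc
    have := mem_spanPQ.1 h j hc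
    simp at this
  · intro h
    rw [spanPQ_eq_coordSub]
    intro j' hj'
    exact Pi.single_eq_of_ne (fun hh => hj' (by rw [hh]; exact mem_idxF.2 h)) _

lemma spanPQ_le_le {t b t' b' : ℕ} (hk : k ≤ n) (ht : t ≤ n - k) (hb : b ≤ k)
    (ht' : t' ≤ n - k) (hb' : b' ≤ k) (h : spanPQ n k t b ≤ spanPQ n k t' b') :
    t ≤ t' ∧ b ≤ b' := by
  constructor
  · by_contra hc
    push_neg at hc
    have hj : t' < n := by omega
    have h1 : (Pi.single (⟨t', hj⟩ : Fin n) (1:ℂ) : Fin n → ℂ) ∈ spanPQ n k t b :=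
      single_mem_spanPQ.2 (Or.inl ⟨by simp; omega, by simp; omega⟩)
    have h2 := single_mem_spanPQ.1 (h h1)
    simp only [Fin.val_mk] at h2 -- wrong lemma name fallback
    omega
  · by_contra hc
    push_neg at hc
    have hj : n - k + b' < n := by omega
    have h1 : (Pi.single (⟨n - k + b', hj⟩ : Fin n) (1:ℂ) : Fin n → ℂ) ∈ spanPQ n k t b :=
      single_mem_spanPQ.2 (Or.inr ⟨by simp, by simp; omega⟩)
    have h2 := single_mem_spanPQ.1 (h h1)
    simp only [Fin.val_mk] at h2
    omega

lemma spanPQ_inj {t b t' b' : ℕ} (hk : k ≤ n) (ht : t ≤ n - k) (hb : b ≤ k)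
    (ht' : t' ≤ n - k) (hb' : b' ≤ k) (h : spanPQ n k t b = spanPQ n k t' b') :
    t = t' ∧ b = b' := by
  obtain ⟨h1, h2⟩ := spanPQ_le_le hk ht hb ht' hb' h.le
  obtain ⟨h3, h4⟩ := spanPQ_le_le hk ht' hb' ht hb h.ge
  omega

lemma Pmod_inf_Qmod (n k : ℕ) : Pmod n k ⊓ Qmod n k = ⊥ := spanPQ_inf_PQ n k

lemma tcount_zero {w : Fin n → Bool} : tcount n w 0 = 0 := by
  rw [tcount, Finset.card_eq_zero]
  ext j; simp

lemma bcount_zero {w : Fin n → Bool} : bcount n w 0 = 0 := by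
  rw [bcount, Finset.card_eq_zero]
  ext j; simp

lemma phi_injective {w w' : Fin n → Bool} (hkn : 2 * k ≤ n) (hw : IsWeightSeq n k w)
    (hw' : IsWeightSeq n k w') (h : PhiFlag n k w = PhiFlag n k w') : w = w' := by
  have hk : k ≤ n := by omega
  have hb : ∀ j : ℕ, j ≤ n → bcount n w j = bcount n w' j := by
    intro j hj
    have hh := congrFun h ⟨j, by omega⟩
    have := spanPQ_inj hk (tcount_le hw j hj) (bcount_le_k hw j hj)
      (tcount_le hw' j hj) (bcount_le_k hw' j hj) hh
    exact this.2
  funext i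
  have h1 := bcount_succ (w := w) i.val i.isLt
  have h2 := bcount_succ (w := w') i.val i.isLt
  have h3 := hb i.val (by omega)
  have h4 := hb (i.val + 1) (by omega)
  have hi : (⟨i.val, i.isLt⟩ : Fin n) = i := Fin.eta i i.isLt
  rw [hi] at h1 h2
  cases hwi : w i <;> cases hwi' : w' i <;> rw [hwi] at h1 <;> rw [hwi'] at h2 <;>
    simp at h1 h2 <;> omega

lemma torusFixed_flag_eq (hkn : 2 * k ≤ n) {F : Fin (n + 1) → Submodule ℂ (Fin n → ℂ)}
    (hF : IsNFlag n k F) (hTF : TorusFixed n k F) :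
    ∃ w : Fin n → Bool, IsWeightSeq n k w ∧ PhiFlag n k w = F := by
  have hk : k ≤ n := by omega
  obtain ⟨hmono, hdim, hN⟩ := hF
  have hInvF : ∀ i : Fin (n + 1), Submodule.map (Nmap n k) (F i) ≤ F i := by
    intro i
    rcases Fin.eq_zero_or_eq_succ i with h0 | ⟨j, rfl⟩
    · have hbot : F i = ⊥ := Submodule.finrank_eq_zero.1 (by rw [hdim i, h0]; rfl)
      rw [hbot, Submodule.map_bot]
    · exact (hN j).trans (hmono (Fin.castSucc_le_succ j))
  have hPinv : ∀ i, Submodule.map (Nmap n k) (F i ⊓ Pmod n k) ≤ F i ⊓ Pmod n k := by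
    intro i
    refine le_inf ((Submodule.map_mono inf_le_left).trans (hInvF i))
      ((Submodule.map_mono inf_le_right).trans
        (map_Nmap_spanPQ (t := n - k) (b := 0) (t' := n - k) (b' := 0) (by omega) (by omega)))
  have hQinv : ∀ i, Submodule.map (Nmap n k) (F i ⊓ Qmod n k) ≤ F i ⊓ Qmod n k := by
    intro i
    refine le_inf ((Submodule.map_mono inf_le_left).trans (hInvF i))
      ((Submodule.map_mono inf_le_right).trans
        (map_Nmap_spanPQ (t := 0) (b := k) (t' := 0) (b' := k) (by omega) (by omega)))
  set t : Fin (n + 1) → ℕ := fun i => finrank ℂ ↥(F i ⊓ Pmod n k) with htdef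
  set b : Fin (n + 1) → ℕ := fun i => finrank ℂ ↥(F i ⊓ Qmod n k) with hbdef
  have hdecP : ∀ i, F i ⊓ Pmod n k = spanPQ n k (t i) 0 ∧ t i ≤ n - k :=
    fun i => block_P hk inf_le_right (hPinv i)
  have hdecQ : ∀ i, F i ⊓ Qmod n k = spanPQ n k 0 (b i) ∧ b i ≤ k :=
    fun i => block_Q hk inf_le_right (hQinv i)
  have hFi : ∀ i, F i = spanPQ n k (t i) (b i) := by
    intro i
    rw [hTF i, (hdecP i).1, (hdecQ i).1, ← spanPQ_sup]
  have hsum : ∀ i : Fin (n + 1), t i + b i = i.val := by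
    intro i
    have hinfbot : (F i ⊓ Pmod n k) ⊓ (F i ⊓ Qmod n k) = ⊥ := by
      rw [eq_bot_iff, ← Pmod_inf_Qmod n k]
      exact inf_le_inf inf_le_right inf_le_right
    have hsup : (F i ⊓ Pmod n k) ⊔ (F i ⊓ Qmod n k) = F i := (hTF i).symm
    have hh := Submodule.finrank_sup_add_finrank_inf_eq (F i ⊓ Pmod n k) (F i ⊓ Qmod n k)
    rw [hinfbot, hsup, finrank_bot, add_zero, hdim i] at hh
    exact hh.symm
  have htmono : ∀ i j : Fin (n + 1), i ≤ j → t i ≤ t j := by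
    intro i j hij
    exact Submodule.finrank_mono (inf_le_inf (hmono hij) le_rfl)
  have hbmono : ∀ i j : Fin (n + 1), i ≤ j → b i ≤ b j := by
    intro i j hij
    exact Submodule.finrank_mono (inf_le_inf (hmono hij) le_rfl)
  set w : Fin n → Bool := fun i => decide (b i.succ = b i.castSucc + 1) with hwdef
  have hwiff : ∀ i : Fin n, w i = true ↔ b i.succ = b i.castSucc + 1 := by
    intro i
    rw [hwdef]
    simp
  have hstep : ∀ i : Fin n,
      b i.succ = b i.castSucc + 1 ∧ t i.succ = t i.castSucc ∨
      b i.succ = b i.castSucc ∧ t i.succ = t i.castSucc + 1 := by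
    intro i
    have h1 := hsum i.succ
    have h2 := hsum i.castSucc
    have h3 := htmono i.castSucc i.succ (Fin.castSucc_le_succ i)
    have h4 := hbmono i.castSucc i.succ (Fin.castSucc_le_succ i)
    rw [Fin.val_succ] at h1
    rw [Fin.coe_castSucc] at h2
    omega
  have hkey : ∀ i : Fin (n + 1), tcount n w i.val = t i ∧ bcount n w i.val = b i := by
    intro i
    induction i using Fin.induction with
    | zero =>
      have h0 := hsum 0
      have h0' : (0 : Fin (n + 1)).val = 0 := rfl
      rw [h0'] at h0
      rw [show (0 : Fin (n + 1)).val = 0 from rfl, tcount_zero, bcount_zero]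
      omega
    | succ i IH =>
      obtain ⟨IHt, IHb⟩ := IH
      have hi' : i.val < n := i.isLt
      have h1 := tcount_succ (w := w) i.val hi'
      have h2 := bcount_succ (w := w) i.val hi'
      have heta : (⟨i.val, hi'⟩ : Fin n) = i := Fin.eta i hi'
      rw [heta] at h1 h2
      rw [Fin.val_succ, Fin.coe_castSucc] at *
      rcases hstep i with ⟨hsb, hst⟩ | ⟨hsb, hst⟩
      · have hwi : w i = true := (hwiff i).2 hsb
        rw [hwi] at h1 h2
        norm_num at h1 h2
        omega
      · have hwi : w i = false := by
          rcases Bool.eq_false_or_eq_true (w i) with h | h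
          · have := (hwiff i).1 h
            omega
          · exact h
        rw [hwi] at h1 h2
        norm_num at h1 h2
        omega
  have hFtop : F (Fin.last n) = ⊤ := by
    apply Submodule.eq_top_of_finrank_eq
    rw [hdim (Fin.last n), Fin.val_last, Module.finrank_fin_fun]
  have hbn : b (Fin.last n) = k := by
    rw [hbdef]
    show finrank ℂ ↥(F (Fin.last n) ⊓ Qmod n k) = k
    rw [hFtop, top_inf_eq]
    show finrank ℂ ↥(spanPQ n k 0 k) = k
    rw [finrank_spanPQ hk (Nat.zero_le _) le_rfl]
    omega
  have hwseq : IsWeightSeq n k w := by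
    rw [IsWeightSeq]
    have hkn' := (hkey (Fin.last n)).2
    rw [Fin.val_last, hbn] at hkn'
    rw [← hkn', bcount]
    congr 1
    ext j
    simp [j.isLt]
  refine ⟨w, hwseq, ?_⟩
  funext i
  obtain ⟨h1, h2⟩ := hkey i
  show spanPQ n k (tcount n w i.val) (bcount n w i.val) = F i
  rw [h1, h2, hFi i]

end Surj

/-- `Φ` is a bijection from weight sequences of shape `(n-k, k)` onto
torus-fixed complete `N`-invariant flags; in particular the Springer fiber contains
exactly `n.choose k` torus-fixed flags. -/
theorem Phi_bijection (n k : ℕ) (hn : 1 ≤ n) (hkn : 2 * k ≤ n) :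
    Set.BijOn (PhiFlag n k) {w | IsWeightSeq n k w}
      {F | IsNFlag n k F ∧ TorusFixed n k F} ∧
    Nat.card {F : Fin (n + 1) → Submodule ℂ (Fin n → ℂ) //
        IsNFlag n k F ∧ TorusFixed n k F} = Nat.choose n k := by
  have hbij : Set.BijOn (PhiFlag n k) {w | IsWeightSeq n k w}
      {F | IsNFlag n k F ∧ TorusFixed n k F} := by
    refine ⟨?_, ?_, ?_⟩
    · intro w hw
      exact ⟨phiFlag_isNFlag hkn hw, phiFlag_torusFixed hkn hw⟩
    · intro w hw w' hw' h
      exact phi_injective hkn hw hw' h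
    · intro F hF
      obtain ⟨w, hw, heq⟩ := torusFixed_flag_eq hkn hF.1 hF.2
      exact ⟨w, hw, heq⟩
  refine ⟨hbij, ?_⟩
  have e2 : {w : Fin n → Bool // IsWeightSeq n k w} ≃ {s : Finset (Fin n) // s.card = k} :=
    { toFun := fun w => ⟨Finset.univ.filter (fun i => w.1 i = true), w.2⟩
      invFun := fun s => ⟨fun i => decide (i ∈ s.1), by
        rw [IsWeightSeq]
        have hss : (Finset.univ.filter fun i => (decide (i ∈ s.1)) = true) = s.1 := by
          ext i; simp
        rw [hss, s.2]⟩
      left_inv := fun w => by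
        apply Subtype.ext
        funext i
        simp
      right_inv := fun s => by
        apply Subtype.ext
        ext i
        simp }
  have hfin : Nat.card {s : Finset (Fin n) // s.card = k} = Nat.choose n k := by
    rw [Nat.card_eq_fintype_card, Fintype.card_finset_len, Fintype.card_fin]
  calc Nat.card {F : Fin (n + 1) → Submodule ℂ (Fin n → ℂ) //
        IsNFlag n k F ∧ TorusFixed n k F}
      = Nat.card {s : Finset (Fin n) // s.card = k} :=
        Nat.card_congr (((Set.BijOn.equiv _ hbij).symm).trans e2)
    _ = Nat.choose n k := hfin

end Springer
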